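/- Let a < b and suppose f : ℂ \ S → ℂ is defined by f(z) = Σₙ aₙ/(z + λₙ), where (λₙ) is a strictly increasing sequence of positive reals, S = {-λₙ : n ∈ ℕ}, and Σ|aₙ|/λₙ < ∞. If f is holomorphic near -λ_{n₀} (i.e., -λ_{n₀} is a removable singularity because the series also equals another such series Σₙ bₙ/(z+μₙ) with -λ_{n₀} ∉ {-μₙ}), then the residue a_{n₀} of f at -λ_{n₀} is 0. -/

import Mathlib

open Complex Filter Topology

private lemma gap_lemma (lam : ℕ → ℝ) (hm : StrictMono lam) (n₀ : ℕ) :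
    ∃ δ > 0, ∀ n, n ≠ n₀ → δ ≤ |lam n - lam n₀| := by
  refine ⟨min (lam (n₀+1) - lam n₀)
      (if n₀ = 0 then lam (n₀+1) - lam n₀ else lam n₀ - lam (n₀-1)), ?_, ?_⟩
  · have h2 : lam n₀ < lam (n₀+1) := hm (by omega)
    rcases eq_or_ne n₀ 0 with h | h
    · simp [h]; linarith [hm (show (0:ℕ) < 1 by omega)]
    · have h1 : lam (n₀-1) < lam n₀ := hm (by omega)
      rw [if_neg h]
      simp only [lt_min_iff]
      constructor <;> linarith
  · intro n hn
    rcases lt_or_gt_of_ne hn with h | h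
    · have hn0 : n₀ ≠ 0 := by omega
      have h1 : lam n ≤ lam (n₀-1) := hm.monotone (by omega)
      have h2 : lam n < lam n₀ := hm h
      rw [_root_.abs_of_nonpos (by linarith), if_neg hn0]
      refine le_trans (min_le_right _ _) (by linarith)
    · have h1 : lam (n₀+1) ≤ lam n := hm.monotone (by omega)
      rw [_root_.abs_of_nonneg (by linarith [hm h])]
      refine le_trans (min_le_left _ _) (by linarith)

private lemma abs_re_le' (t d : ℝ) : |d| ≤ ‖Complex.I * t + d‖ := by
  have := Complex.abs_re_le_norm (Complex.I * t + d)
  simpa using this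

private lemma abs_im_le' (t d : ℝ) : |t| ≤ ‖Complex.I * t + d‖ := by
  have := Complex.abs_im_le_norm (Complex.I * t + d)
  simpa using this

private lemma It_ne (t d : ℝ) (ht : 0 < t) : (Complex.I * t + d) ≠ 0 := by
  intro h
  have := congrArg Complex.im h
  simp at this
  linarith

/-- Residue argument (analytic heart of Proposition 2.2): suppose
`f(z) = Σₙ aₙ/(z + λₙ) = Σₙ bₙ/(z + μₙ)` outside the poles, where `(λₙ)`, `(μₙ)` are
strictly increasing sequences of positive reals and `Σ |aₙ|/λₙ`, `Σ |bₙ|/μₙ` converge.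
If `-λ_{n₀}` is not among the poles `{-μₙ}`, then the residue `a_{n₀}` vanishes. -/
theorem stmt_19 (a b : ℕ → ℂ) (lam mu : ℕ → ℝ)
    (hlam_mono : StrictMono lam) (hlam_pos : ∀ n, 0 < lam n)
    (hmu_mono : StrictMono mu) (hmu_pos : ∀ n, 0 < mu n)
    (ha : Summable (fun n => ‖a n‖ / lam n))
    (hb : Summable (fun n => ‖b n‖ / mu n))
    (heq : ∀ z : ℂ, (∀ n, z ≠ -(lam n : ℂ)) → (∀ n, z ≠ -(mu n : ℂ)) →
      (∑' n : ℕ, a n / (z + (lam n : ℂ))) = ∑' n : ℕ, b n / (z + (mu n : ℂ)))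
    (n₀ : ℕ) (hpole : ∀ n, lam n₀ ≠ mu n) :
    a n₀ = 0 := by
  obtain ⟨δ, hδ, hgap⟩ := gap_lemma lam hlam_mono n₀
  have hL0 : 0 < lam n₀ := hlam_pos n₀
  obtain ⟨C, hCdef⟩ : ∃ C : ℝ, C = 2 * lam n₀ / δ + 2 := ⟨_, rfl⟩
  have hC : 0 ≤ C := by rw [hCdef]; positivity
  obtain ⟨C', hC'def⟩ : ∃ C' : ℝ, C' = 2 * lam n₀ + 2 := ⟨_, rfl⟩
  set F : ℝ → ℕ → ℂ := fun t n => (I * t) * (a n / (I * t + ((lam n - lam n₀ : ℝ) : ℂ))) with hF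
  set G : ℝ → ℕ → ℂ := fun t n => (I * t) * (b n / (I * t + ((mu n - lam n₀ : ℝ) : ℂ))) with hG
  have hIoc : Set.Ioc (0:ℝ) 1 ∈ 𝓝[>] (0:ℝ) := Ioc_mem_nhdsGT_of_mem (by simp)
  have hIt : Tendsto (fun t : ℝ => (I * t : ℂ)) (𝓝[>] 0) (𝓝 0) := by
    have : Continuous (fun t : ℝ => (I * t : ℂ)) :=
      continuous_const.mul Complex.continuous_ofReal
    simpa using (this.tendsto 0).mono_left nhdsWithin_le_nhds
  -- norm of generic term
  have hnorm : ∀ (c : ℂ) (t d : ℝ), 0 < t →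
      ‖(I * (t:ℂ)) * (c / (I * t + (d:ℂ)))‖
        = t * (‖c‖ / ‖I * t + (d:ℂ)‖) := by
    intro c t d ht
    simp [map_mul, map_div₀, _root_.abs_of_pos ht]
  -- limit of F side
  have hA : Tendsto (fun t => ∑' n, F t n) (𝓝[>] (0:ℝ)) (𝓝 (a n₀)) := by
    have := tendsto_tsum_of_dominated_convergence
      (f := F) (g := fun n => if n = n₀ then a n₀ else 0)
      (bound := fun n => (if n = n₀ then ‖a n₀‖ else 0)
        + C * (‖a n‖ / lam n)) (𝓕 := 𝓝[>] (0:ℝ)) ?_ ?_ ?_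
    · simpa [tsum_ite_eq] using this
    · exact Summable.add
        (summable_of_ne_finset_zero (s := {n₀}) (by intro n hn; simp at hn; simp [hn]))
        (ha.mul_left C)
    · intro n
      beta_reduce
      rcases eq_or_ne n n₀ with rfl | hn
      · rw [if_pos rfl]
        apply Tendsto.congr' ?_ (tendsto_const_nhds (x := a n))
        filter_upwards [self_mem_nhdsWithin] with t ht
        have ht' : (0:ℝ) < t := ht
        have hne : (I * (t:ℂ)) ≠ 0 := by simpa using It_ne t 0 ht'
        simp only [hF, sub_self, Complex.ofReal_zero, add_zero]
        field_simp
        exact (mul_div_cancel_right₀ _ (by exact_mod_cast ht'.ne' : (t:ℂ) ≠ 0)).symm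
      · rw [if_neg hn]
        have hc : ((lam n - lam n₀ : ℝ) : ℂ) ≠ 0 := by
          exact_mod_cast sub_ne_zero.mpr (fun h => hn (hlam_mono.injective h))
        have hden : Tendsto (fun t : ℝ => (I * t + ((lam n - lam n₀ : ℝ) : ℂ)))
            (𝓝[>] 0) (𝓝 ((lam n - lam n₀ : ℝ) : ℂ)) := by
          simpa using hIt.add (tendsto_const_nhds (x := ((lam n - lam n₀ : ℝ) : ℂ)))
        have h0 := hIt.mul ((tendsto_const_nhds (x := a n)).div hden hc)
        simpa only [zero_mul, Pi.div_apply] using h0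
    · filter_upwards [hIoc] with t ht n
      obtain ⟨ht0, ht1⟩ := ht
      have hM : t ≤ ‖I * t + ((lam n - lam n₀ : ℝ) : ℂ)‖ := by
        have := abs_im_le' t (lam n - lam n₀)
        rwa [_root_.abs_of_pos ht0] at this
      have hMpos : 0 < ‖I * t + ((lam n - lam n₀ : ℝ) : ℂ)‖ :=
        lt_of_lt_of_le ht0 hM
      simp only [hF]
      rw [hnorm _ t _ ht0]
      rcases eq_or_ne n n₀ with rfl | hn
      · rw [if_pos rfl]
        have h1 : t * (‖a n‖ / ‖I * ↑t + ((lam n - lam n : ℝ) : ℂ)‖) =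
            ‖a n‖ := by
          rw [sub_self, Complex.ofReal_zero, add_zero]
          have : ‖I * (t:ℂ)‖ = t := by
            simp [map_mul, _root_.abs_of_pos ht0]
          rw [this]; field_simp
        rw [h1]
        have : 0 ≤ C * (‖a n‖ / lam n) := by positivity
        linarith
      · rw [if_neg hn]
        have hd : δ ≤ ‖I * t + ((lam n - lam n₀ : ℝ) : ℂ)‖ :=
          le_trans (hgap n hn) (abs_re_le' t (lam n - lam n₀))
        set M := ‖I * t + ((lam n - lam n₀ : ℝ) : ℂ)‖ with hMdef
        have hfrac : t / M ≤ C / lam n := by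
          rw [div_le_div_iff₀ hMpos (hlam_pos n)]
          rcases le_or_gt (lam n) (2 * lam n₀) with hcase | hcase
          · have e1 : t * lam n ≤ 2 * lam n₀ := by nlinarith [hlam_pos n]
            have e2 : 2 * lam n₀ = (2 * lam n₀ / δ) * δ := by field_simp
            have e3 : (2 * lam n₀ / δ) * δ ≤ (2 * lam n₀ / δ) * M :=
              mul_le_mul_of_nonneg_left hd (by positivity)
            have e4 : (2 * lam n₀ / δ) * M ≤ C * M := by
              rw [hCdef]; nlinarith
            linarith
          · have hd2 : lam n - lam n₀ ≤ M :=
              le_trans (le_abs_self _) (abs_re_le' t (lam n - lam n₀))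
            have e1 : t * lam n ≤ lam n := by nlinarith [hlam_pos n]
            have e4 : 2 * M ≤ C * M := by
              rw [hCdef]
              have h5 : 0 ≤ (2 * lam n₀ / δ) * M := by positivity
              nlinarith
            linarith
        calc t * (‖a n‖ / M) = ‖a n‖ * (t / M) := by ring
          _ ≤ ‖a n‖ * (C / lam n) :=
              mul_le_mul_of_nonneg_left hfrac (norm_nonneg _)
          _ = C * (‖a n‖ / lam n) := by ring
          _ ≤ _ := by simp
  -- limit of G side
  have hB : Tendsto (fun t => ∑' n, G t n) (𝓝[>] (0:ℝ)) (𝓝 0) := by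
    have := tendsto_tsum_of_dominated_convergence
      (f := G) (g := fun _ => (0:ℂ))
      (bound := fun n => C' * (‖b n‖ / mu n)) (𝓕 := 𝓝[>] (0:ℝ)) ?_ ?_ ?_
    · simpa using this
    · exact hb.mul_left C'
    · intro n
      have hc : ((mu n - lam n₀ : ℝ) : ℂ) ≠ 0 := by
        exact_mod_cast sub_ne_zero.mpr (fun h => (hpole n) h.symm)
      have hden : Tendsto (fun t : ℝ => (I * t + ((mu n - lam n₀ : ℝ) : ℂ)))
          (𝓝[>] 0) (𝓝 ((mu n - lam n₀ : ℝ) : ℂ)) := by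
        simpa using hIt.add (tendsto_const_nhds (x := ((mu n - lam n₀ : ℝ) : ℂ)))
      have h0 := hIt.mul ((tendsto_const_nhds (x := b n)).div hden hc)
      simpa only [zero_mul, Pi.div_apply] using h0
    · filter_upwards [hIoc] with t ht n
      obtain ⟨ht0, ht1⟩ := ht
      have hM : t ≤ ‖I * t + ((mu n - lam n₀ : ℝ) : ℂ)‖ := by
        have := abs_im_le' t (mu n - lam n₀)
        rwa [_root_.abs_of_pos ht0] at this
      have hMpos : 0 < ‖I * t + ((mu n - lam n₀ : ℝ) : ℂ)‖ :=
        lt_of_lt_of_le ht0 hM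
      simp only [hG]
      rw [hnorm _ t _ ht0]
      set M := ‖I * t + ((mu n - lam n₀ : ℝ) : ℂ)‖ with hMdef
      have hfrac : t / M ≤ C' / mu n := by
        rw [div_le_div_iff₀ hMpos (hmu_pos n)]
        rcases le_or_gt (mu n) (2 * lam n₀) with hcase | hcase
        · have e1 : t * mu n ≤ t * (2 * lam n₀) :=
            mul_le_mul_of_nonneg_left hcase ht0.le
          have e2 : t * (2 * lam n₀ + 2) ≤ M * (2 * lam n₀ + 2) :=
            mul_le_mul_of_nonneg_right hM (by positivity)
          rw [hC'def]
          nlinarith [ht0, hmu_pos n]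
        · have hd2 : mu n - lam n₀ ≤ M :=
            le_trans (le_abs_self _) (abs_re_le' t (mu n - lam n₀))
          have e1 : t * mu n ≤ mu n := by nlinarith [hmu_pos n]
          have e4 : 2 * M ≤ C' * M := by rw [hC'def]; nlinarith
          linarith
      calc t * (‖b n‖ / M) = ‖b n‖ * (t / M) := by ring
        _ ≤ ‖b n‖ * (C' / mu n) :=
            mul_le_mul_of_nonneg_left hfrac (norm_nonneg _)
        _ = C' * (‖b n‖ / mu n) := by ring
  -- eventual equality of the two tsums
  have hEq : (fun t => ∑' n, F t n) =ᶠ[𝓝[>] (0:ℝ)] (fun t => ∑' n, G t n) := by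
    filter_upwards [self_mem_nhdsWithin] with t ht
    have ht0 : (0:ℝ) < t := ht
    set z : ℂ := I * t - lam n₀ with hz
    have hz1 : ∀ n, z ≠ -(lam n : ℂ) := by
      intro n h
      have := congrArg Complex.im h
      simp [hz] at this
      linarith
    have hz2 : ∀ n, z ≠ -(mu n : ℂ) := by
      intro n h
      have := congrArg Complex.im h
      simp [hz] at this
      linarith
    have h1 : ∀ n, F t n = (I * (t:ℂ)) * (a n / (z + lam n)) := by
      intro n; simp only [hF, hz]; push_cast; ring_nf
    have h2 : ∀ n, G t n = (I * (t:ℂ)) * (b n / (z + mu n)) := by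
      intro n; simp only [hG, hz]; push_cast; ring_nf
    calc ∑' n, F t n = ∑' n, (I * (t:ℂ)) * (a n / (z + lam n)) := tsum_congr h1
      _ = (I * (t:ℂ)) * ∑' n, a n / (z + lam n) := tsum_mul_left
      _ = (I * (t:ℂ)) * ∑' n, b n / (z + mu n) := by rw [heq z hz1 hz2]
      _ = ∑' n, (I * (t:ℂ)) * (b n / (z + mu n)) := tsum_mul_left.symm
      _ = ∑' n, G t n := (tsum_congr h2).symm
  exact tendsto_nhds_unique hA (hB.congr' hEq.symm)
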